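/- Let q be a power of a prime p, let n ≥ 1 be an integer with p ∤ n, and let Ψ : F_q → ℂ^× be a nontrivial additive character. Then Σ_{X ∈ gl_n(F_q)} q^{dim 𝔠(X)} Ψ(tr X) = 0, where for X ∈ gl_n(F_q) the centralizer is 𝔠(X) = { Y ∈ gl_n(F_q) : XY = YX } and dim denotes its dimension as an F_q-vector space. -/
import Mathlib


open scoped BigOperators

/-- Let `F = F_q` be a finite field of characteristic `p` and let
`n ≥ 1` with `p ∤ n`.  Then `∑_{X ∈ gl_n(F_q)} q^{dim 𝔠(X)} ψ(tr X) = 0`, where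
`𝔠(X) = {Y : XY = YX}` is the Lie algebra centralizer of `X` and `ψ` is a nontrivial
additive character of `F_q`. -/
theorem sum_card_centralizer_char_trace_eq_zero
    (F : Type*) [Field F] [Fintype F]
    (ψ : AddChar F ℂ) (hψ : ψ ≠ 1)
    (n : ℕ) (hn : 1 ≤ n) (hp : ¬ (ringChar F ∣ n)) :
    ∑ X : Matrix (Fin n) (Fin n) F,
        (Fintype.card F : ℂ) ^
            (Module.finrank F
              (LinearMap.ker (LinearMap.mulLeft F X - LinearMap.mulRight F X))) *
          ψ (Matrix.trace X) = 0 := by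
  classical
  have hn0 : (n : F) ≠ 0 := fun h => hp ((CharP.cast_eq_zero_iff F (ringChar F) n).mp h)
  -- Step 1: the power of q equals the number of matrices commuting with X.
  have key : ∀ X : Matrix (Fin n) (Fin n) F,
      (Fintype.card F : ℂ) ^
        (Module.finrank F
          (LinearMap.ker (LinearMap.mulLeft F X - LinearMap.mulRight F X)))
      = ∑ Y : Matrix (Fin n) (Fin n) F, if X * Y = Y * X then (1 : ℂ) else 0 := by
    intro X
    have h1 : Fintype.card
        (LinearMap.ker (LinearMap.mulLeft F X - LinearMap.mulRight F X))
        = Fintype.card F ^ (Module.finrank F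
          (LinearMap.ker (LinearMap.mulLeft F X - LinearMap.mulRight F X))) :=
      Module.card_eq_pow_finrank (K := F)
    have h2 : Fintype.card
        (LinearMap.ker (LinearMap.mulLeft F X - LinearMap.mulRight F X))
        = Fintype.card {Y : Matrix (Fin n) (Fin n) F // X * Y = Y * X} := by
      refine Fintype.card_congr (Equiv.subtypeEquivRight fun Y => ?_)
      simp [LinearMap.mem_ker, sub_eq_zero]
    rw [Finset.sum_boole, ← Fintype.card_subtype, ← h2, h1]
    push_cast
    ring
  simp_rw [key, Finset.sum_mul, ite_mul, one_mul, zero_mul]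
  rw [Finset.sum_comm]
  -- Step 2: for each Y, the sum of ψ(tr X) over the centralizer of Y vanishes.
  refine Finset.sum_eq_zero fun Y _ => ?_
  set V : Submodule F (Matrix (Fin n) (Fin n) F) :=
    LinearMap.ker (LinearMap.mulRight F Y - LinearMap.mulLeft F Y) with hV
  have hmem : ∀ X : Matrix (Fin n) (Fin n) F, X ∈ V ↔ X * Y = Y * X := by
    intro X
    simp [hV, LinearMap.mem_ker, sub_eq_zero]
  have h3 : ∑ X : Matrix (Fin n) (Fin n) F, (if X * Y = Y * X then ψ (Matrix.trace X) else 0)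
      = ∑ x : V, ψ (Matrix.trace (x : Matrix (Fin n) (Fin n) F)) := by
    rw [← Finset.sum_filter]
    refine (Finset.sum_subtype (p := (· ∈ V))
      (Finset.filter (fun a => a * Y = Y * a) Finset.univ) (fun X => ?_)
      (fun X => ψ (Matrix.trace X)))
    simp [Finset.mem_filter, hmem X]
  rw [h3]
  -- The restriction of ψ ∘ trace to V is a nontrivial additive character on V.
  set χ : AddChar V ℂ :=
    ψ.compAddMonoidHom
      (((Matrix.traceLinearMap (Fin n) F F).comp V.subtype).toAddMonoidHom) with hχ
  have hχapp : ∀ x : V, χ x = ψ (Matrix.trace (x : Matrix (Fin n) (Fin n) F)) := by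
    intro x; simp [hχ]
  have hχne : χ ≠ 0 := by
    rw [AddChar.ne_zero_iff]
    obtain ⟨t, ht⟩ := AddChar.ne_one_iff.mp hψ
    have hX0 : ((t / (n : F)) • (1 : Matrix (Fin n) (Fin n) F)) ∈ V := by
      rw [hmem]
      simp [Matrix.smul_mul, Matrix.mul_smul]
    refine ⟨⟨_, hX0⟩, ?_⟩
    rw [hχapp]
    have : Matrix.trace ((t / (n : F)) • (1 : Matrix (Fin n) (Fin n) F)) = t := by
      rw [Matrix.trace_smul, Matrix.trace_one, Fintype.card_fin, smul_eq_mul,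
        div_mul_cancel₀ _ hn0]
    rw [this]
    exact ht
  calc ∑ x : V, ψ (Matrix.trace (x : Matrix (Fin n) (Fin n) F))
      = ∑ x : V, χ x := by simp_rw [hχapp]
    _ = 0 := AddChar.sum_eq_zero_iff_ne_zero.mpr hχne
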